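/- If the cevians from A, B, C through the first isodynamic point S are extended to meet the circumcircle again at P, Q, R respectively, then triangle PQR is equilateral. -/

import Mathlib

open EuclideanGeometry Real

noncomputable section

abbrev Pt := EuclideanSpace ℝ (Fin 2)

/-- `S` is the first isodynamic point of triangle `ABC`: it lies on the three
Apollonius circles (e.g. the `A`-Apollonius circle is the locus of `P` with
`PB/PC = AB/AC`) and lies inside the circumcircle. -/
def IsFirstIsodynamic (A B C S : Pt) : Prop :=
  dist S B * dist A C = dist S C * dist A B ∧
  dist S A * dist B C = dist S C * dist B A ∧
  dist S A * dist C B = dist S B * dist C A ∧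
  ∃ O r, dist O A = r ∧ dist O B = r ∧ dist O C = r ∧ dist O S < r

set_option maxHeartbeats 1000000

lemma key_second (O A S P : Pt) (r : ℝ) (hOA : dist O A = r) (hOP : dist O P = r)
    (hOS : dist O S < r) (hPA : P ≠ A)
    (hcol : Collinear ℝ ({A, S, P} : Set Pt)) :
    P - S = -(((r ^ 2 - dist O S ^ 2) / dist A S ^ 2)) • (A - S) := by
  have hSA : S ≠ A := by
    rintro rfl
    exact absurd hOA (ne_of_lt hOS)
  have hA : A ∈ ({A, S, P} : Set Pt) := by simp
  rw [collinear_iff_of_mem hA] at hcol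
  obtain ⟨v, hv⟩ := hcol
  obtain ⟨cS, hcS⟩ := hv S (by simp)
  obtain ⟨cP, hcP⟩ := hv P (by simp)
  have hcS0 : cS ≠ 0 := by
    rintro rfl
    simp only [zero_smul, zero_vadd] at hcS
    exact hSA hcS
  set s : ℝ := cP / cS with hs
  have hw : S - A = cS • v := by
    rw [hcS, vadd_eq_add, add_sub_cancel_right]
  have hPw : P - A = s • (S - A) := by
    rw [hcP, vadd_eq_add, add_sub_cancel_right, hw, smul_smul, hs,
      div_mul_cancel₀ _ hcS0]
  have hs0 : s ≠ 0 := by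
    rintro h
    rw [h, zero_smul, sub_eq_zero] at hPw
    exact hPA hPw
  set a : Pt := A - O with ha
  set w : Pt := S - A with hwdef
  set u : Pt := S - O with hu
  have hna : ‖a‖ = r := by rw [ha, ← dist_eq_norm, dist_comm]; exact hOA
  have hnu : ‖u‖ = dist O S := by rw [hu, ← dist_eq_norm, dist_comm]
  have hna2 : ‖a‖ ^ 2 = r ^ 2 := by rw [hna]
  have hnu2 : ‖u‖ ^ 2 = dist O S ^ 2 := by rw [hnu]
  have hw0 : w ≠ 0 := by rw [hwdef, sub_ne_zero]; exact hSA
  have hnw : ‖w‖ ≠ 0 := norm_ne_zero_iff.mpr hw0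
  have hPO : P - O = a + s • w := by
    rw [ha, hwdef, ← hPw]; abel
  have hsq : ‖a + s • w‖ ^ 2 = ‖a‖ ^ 2 := by
    rw [← hPO, ha, ← dist_eq_norm, ← dist_eq_norm, dist_comm P O, dist_comm A O, hOP, hOA]
  have hexp : 2 * s * inner ℝ a w + s ^ 2 * ‖w‖ ^ 2 = 0 := by
    have h1 := norm_add_sq_real a (s • w)
    rw [hsq, real_inner_smul_right, norm_smul] at h1
    have habs : (‖s‖ * ‖w‖) ^ 2 = s ^ 2 * ‖w‖ ^ 2 := by
      rw [mul_pow, Real.norm_eq_abs, sq_abs]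
    rw [habs] at h1
    linarith
  have hkey : 2 * inner ℝ a w + s * ‖w‖ ^ 2 = 0 := by
    have h2 : s * (2 * inner ℝ a w + s * ‖w‖ ^ 2) = 0 := by linear_combination hexp
    rcases mul_eq_zero.mp h2 with h | h
    · exact absurd h hs0
    · exact h
  have hwua : w = u - a := by rw [hwdef, hu, ha]; abel
  have hinner1 : (inner ℝ a w : ℝ) = inner ℝ a u - ‖a‖ ^ 2 := by
    rw [hwua, inner_sub_right, real_inner_self_eq_norm_sq]
  have hinner2 : ‖w‖ ^ 2 = ‖u‖ ^ 2 - 2 * inner ℝ a u + ‖a‖ ^ 2 := by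
    rw [hwua, norm_sub_sq_real]
    linear_combination (-2:ℝ) * real_inner_comm a u
  have hdAS : dist A S = ‖w‖ := by
    rw [hwdef, ← dist_eq_norm, dist_comm]
  have hscal : s - 1 = (r ^ 2 - dist O S ^ 2) / dist A S ^ 2 := by
    rw [hdAS, eq_div_iff (by positivity)]
    linear_combination hkey - 2 * hinner1 - hinner2 + hna2 - hnu2
  have hPS : P - S = (s - 1) • w := by
    have h3 : P - S = (P - A) - w := by rw [hwdef]; abel
    rw [h3, hPw]
    module
  rw [hPS, hscal, hwdef]
  module

theorem stmt15 (A B C S O P Q R : Pt) (r : ℝ)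
    (hABC : AffineIndependent ℝ ![A, B, C])
    (hS : IsFirstIsodynamic A B C S)
    (hOA : dist O A = r) (hOB : dist O B = r) (hOC : dist O C = r)
    (hP : P ≠ A ∧ dist O P = r ∧ Collinear ℝ ({A, S, P} : Set Pt))
    (hQ : Q ≠ B ∧ dist O Q = r ∧ Collinear ℝ ({B, S, Q} : Set Pt))
    (hR : R ≠ C ∧ dist O R = r ∧ Collinear ℝ ({C, S, R} : Set Pt)) :
    dist P Q = dist Q R ∧ dist Q R = dist R P := by
  obtain ⟨hS1, hS2, hS3, O', r', hO'A, hO'B, hO'C, hO'S⟩ := hS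
  obtain ⟨hPA, hOP, hcolP⟩ := hP
  obtain ⟨hQB, hOQ, hcolQ⟩ := hQ
  obtain ⟨hRC, hOR, hcolR⟩ := hR
  -- S is inside the circle centred at O too, by uniqueness of the circumcircle.
  have hOS : dist O S < r := by
    have hsph := hABC.existsUnique_dist_eq
    obtain ⟨sph, _, hsph2⟩ := hsph
    have hspan : affineSpan ℝ (Set.range ![A, B, C]) = ⊤ := by
      refine hABC.affineSpan_eq_top_iff_card_eq_finrank_add_one.mpr ?_
      simp [finrank_euclideanSpace]
    have hmem : ∀ (X : Pt) (ρ : ℝ), dist X A = ρ → dist X B = ρ → dist X C = ρ →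
        (⟨X, ρ⟩ : EuclideanGeometry.Sphere Pt) = sph := by
      intro X ρ h1 h2 h3
      refine hsph2 _ ⟨by rw [hspan]; trivial, ?_⟩
      rintro p ⟨i, rfl⟩
      fin_cases i <;>
        simp only [Matrix.cons_val_zero, Matrix.cons_val_one, Matrix.head_cons,
          Metric.mem_sphere] <;> rw [dist_comm] <;> assumption
    have h1 := hmem O r hOA hOB hOC
    have h2 := hmem O' r' hO'A hO'B hO'C
    have h12 := h1.trans h2.symm
    have hO : O = O' := congrArg EuclideanGeometry.Sphere.center h12
    have hr : r = r' := congrArg EuclideanGeometry.Sphere.radius h12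
    rw [hO, hr]
    exact hO'S
  set k : ℝ := r ^ 2 - dist O S ^ 2 with hk
  have hrpos : 0 < r := lt_of_le_of_lt dist_nonneg hOS
  have hkpos : 0 < k := by
    have h0 : 0 ≤ dist O S := dist_nonneg
    nlinarith [hOS]
  have hSA : S ≠ A := by rintro rfl; exact absurd hOA (ne_of_lt hOS)
  have hSB : S ≠ B := by rintro rfl; exact absurd hOB (ne_of_lt hOS)
  have hSC : S ≠ C := by rintro rfl; exact absurd hOC (ne_of_lt hOS)
  have hAS : (0:ℝ) < dist A S := dist_pos.mpr (fun h => hSA h.symm)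
  have hBS : (0:ℝ) < dist B S := dist_pos.mpr (fun h => hSB h.symm)
  have hCS : (0:ℝ) < dist C S := dist_pos.mpr (fun h => hSC h.symm)
  have hPk := key_second O A S P r hOA hOP hOS hPA hcolP
  have hQk := key_second O B S Q r hOB hOQ hOS hQB hcolQ
  have hRk := key_second O C S R r hOC hOR hOS hRC hcolR
  set Rad : ℝ := Real.sqrt k with hRad
  have hRad2 : Rad ^ 2 = k := Real.sq_sqrt hkpos.le
  have hinv : ∀ X : Pt, inversion S Rad X - S = ((k / dist X S ^ 2)) • (X - S) := by
    intro X
    simp only [inversion, vsub_eq_sub, vadd_eq_add]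
    rw [add_sub_cancel_right, div_pow, hRad2]
  have hdist : ∀ X Y XX YY : Pt, XX - S = -((k / dist X S ^ 2)) • (X - S) →
      YY - S = -((k / dist Y S ^ 2)) • (Y - S) → X ≠ S → Y ≠ S →
      dist XX YY = k / (dist X S * dist Y S) * dist X Y := by
    intro X Y XX YY hX hY hXS hYS
    have hsub : XX - YY = inversion S Rad Y - inversion S Rad X := by
      have h1 : XX - YY = (XX - S) - (YY - S) := by abel
      have h2 : inversion S Rad Y - inversion S Rad X
          = (inversion S Rad Y - S) - (inversion S Rad X - S) := by abel
      rw [h1, h2, hX, hY, hinv, hinv]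
      module
    have h3 : dist XX YY = dist (inversion S Rad Y) (inversion S Rad X) := by
      rw [dist_eq_norm, dist_eq_norm, hsub]
    rw [h3, dist_inversion_inversion hYS hXS, hRad2, dist_comm Y X]
    ring
  have hAS' : A ≠ S := fun h => hSA h.symm
  have hBS' : B ≠ S := fun h => hSB h.symm
  have hCS' : C ≠ S := fun h => hSC h.symm
  have hPQ : dist P Q = k / (dist A S * dist B S) * dist A B :=
    hdist A B P Q hPk hQk hAS' hBS'
  have hQR : dist Q R = k / (dist B S * dist C S) * dist B C :=
    hdist B C Q R hQk hRk hBS' hCS'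
  have hRP : dist R P = k / (dist C S * dist A S) * dist C A :=
    hdist C A R P hRk hPk hCS' hAS'
  have e1 : dist C S * dist A B = dist A S * dist B C := by
    rw [dist_comm C S, dist_comm A B, dist_comm A S]; exact hS2.symm
  have e2 : dist A S * dist B C = dist B S * dist C A := by
    rw [dist_comm A S, dist_comm B C, dist_comm B S]; exact hS3
  constructor
  · rw [hPQ, hQR]
    rw [div_mul_eq_mul_div, div_mul_eq_mul_div, div_eq_div_iff (by positivity) (by positivity)]
    linear_combination k * dist B S * e1
  · rw [hQR, hRP]
    rw [div_mul_eq_mul_div, div_mul_eq_mul_div, div_eq_div_iff (by positivity) (by positivity)]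
    linear_combination k * dist C S * e2
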